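/- arXiv:2303.14796 — 2 statements merged into one kernel-verified Lean document; each statement's English description precedes it below -/
import Mathlib

section
/- Let σ ∈ Stmt^ω, X ∈ (2^{ρ∪υ})^ω and ζ a computation with ζ ◁ combine(σ, X). Then ζ equals the adapted computation of its reduction, i.e. ζ = (ζ|σ)~, the adapted computation built from ζ|σ. -/
namespace TSLMC

open scoped Classical

/-! ### Theories, function terms, assignments -/

/-- A theory: interpretation of function symbols, plus distinguished values true/false. -/
structure Thy (V F : Type) where
  ε : F → List V → V
  vtrue : V
  vfalse : V

/-- Function terms over inputs `I`, cells `C` and function symbols `F`. -/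
inductive FTerm (I C F : Type) : Type where
  | inp  : I → FTerm I C F
  | cell : C → FTerm I C F
  | app  : F → List (FTerm I C F) → FTerm I C F

/-- An assignment gives values to inputs and cells. -/
abbrev Assign (V I C : Type) := I ⊕ C → V

variable {V I C F Pi : Type}

/-- Evaluation of a function term under an assignment. -/
def FTerm.eval (T : Thy V F) (a : Assign V I C) : FTerm I C F → V
  | .inp i => a (.inl i)
  | .cell c => a (.inr c)
  | .app f ts => T.ε f (ts.attach.map fun t => t.1.eval T a)
decreasing_by
  have := List.sizeOf_lt_of_mem t.2
  simp only [FTerm.app.sizeOf_spec]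
  omega

/-- A predicate term is a function term evaluating only to true or false. -/
def IsPredTerm (T : Thy V F) (τ : FTerm I C F) : Prop :=
  ∀ a : Assign V I C, τ.eval T a = T.vtrue ∨ τ.eval T a = T.vfalse

/-- The theory contains (at least) equality, negation, conjunction and a true constant,
with their usual interpretations, and true ≠ false. -/
structure Ops (V F : Type) (T : Thy V F) where
  feq : F
  fneg : F
  fand : F
  ftrue : F
  heq : ∀ x y : V, T.ε feq [x, y] = if x = y then T.vtrue else T.vfalse
  hneg : ∀ x : V, T.ε fneg [x] = if x = T.vtrue then T.vfalse else T.vtrue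
  hand : ∀ x y : V, T.ε fand [x, y] = if x = T.vtrue ∧ y = T.vtrue then T.vtrue else T.vfalse
  htrue : T.ε ftrue [] = T.vtrue
  tne : T.vtrue ≠ T.vfalse

/-! ### TSL(T) formulas -/

/-- TSL(T) formulas (atoms: predicate terms and update terms `⟦c ↞ τ⟧`). -/
inductive TSL (I C F : Type) : Type where
  | pred : FTerm I C F → TSL I C F
  | upd  : C → FTerm I C F → TSL I C F
  | not  : TSL I C F → TSL I C F
  | and  : TSL I C F → TSL I C F → TSL I C F
  | next : TSL I C F → TSL I C F
  | untl : TSL I C F → TSL I C F → TSL I C F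

/-- `prevA init ζ t` is `ζ (t-1)`, with the fixed initial assignment at `t = 0`. -/
def prevA (init : Assign V I C) (ζ : ℕ → Assign V I C) : ℕ → Assign V I C
  | 0 => init
  | t + 1 => ζ t

/-- Satisfaction of a TSL(T) formula over a computation at a time point. -/
def TSL.sat (T : Thy V F) (init : Assign V I C) (ζ : ℕ → Assign V I C) :
    TSL I C F → ℕ → Prop
  | .pred τ, t => τ.eval T (ζ t) = T.vtrue
  | .upd c τ, t => τ.eval T (prevA init ζ t) = ζ t (.inr c)
  | .not φ, t => ¬ φ.sat T init ζ t
  | .and φ ψ, t => φ.sat T init ζ t ∧ ψ.sat T init ζ t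
  | .next φ, t => φ.sat T init ζ (t + 1)
  | .untl φ ψ, t => ∃ t', t ≤ t' ∧ ψ.sat T init ζ t' ∧
      ∀ t'', t ≤ t'' → t'' < t' → φ.sat T init ζ t''

/-- The list of predicate terms appearing in a TSL(T) formula. -/
def TSL.predList : TSL I C F → List (FTerm I C F)
  | .pred τ => [τ]
  | .upd _ _ => []
  | .not φ => φ.predList
  | .and φ ψ => φ.predList ++ ψ.predList
  | .next φ => φ.predList
  | .untl φ ψ => φ.predList ++ ψ.predList

/-- The list of update terms appearing in a TSL(T) formula. -/
def TSL.updList : TSL I C F → List (C × FTerm I C F)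
  | .pred _ => []
  | .upd c τ => [(c, τ)]
  | .not φ => φ.updList
  | .and φ ψ => φ.updList ++ ψ.updList
  | .next φ => φ.updList
  | .untl φ ψ => φ.updList ++ ψ.updList

/-! ### LTL -/

/-- LTL formulas over atomic propositions `A`. -/
inductive LTL (A : Type) : Type where
  | atom : A → LTL A
  | not : LTL A → LTL A
  | and : LTL A → LTL A → LTL A
  | next : LTL A → LTL A
  | untl : LTL A → LTL A → LTL A

/-- Standard LTL satisfaction over words of sets of atomic propositions. -/
def LTL.sat (w : ℕ → Set A) : LTL A → ℕ → Prop
  | .atom a, t => a ∈ w t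
  | .not φ, t => ¬ φ.sat w t
  | .and φ ψ, t => φ.sat w t ∧ ψ.sat w t
  | .next φ, t => φ.sat w (t + 1)
  | .untl φ ψ, t => ∃ t', t ≤ t' ∧ ψ.sat w t' ∧ ∀ t'', t ≤ t'' → t'' < t' → φ.sat w t''

/-- Atomic propositions: predicate terms and update terms. -/
abbrev AP (I C F : Type) := FTerm I C F ⊕ (C × FTerm I C F)

/-- The LTL formula obtained from a TSL(T) formula by treating predicate and
update terms as atomic propositions. -/
def TSL.toLTL : TSL I C F → LTL (AP I C F)
  | .pred τ => .atom (.inl τ)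
  | .upd c τ => .atom (.inr (c, τ))
  | .not φ => .not φ.toLTL
  | .and φ ψ => .and φ.toLTL ψ.toLTL
  | .next φ => .next φ.toLTL
  | .untl φ ψ => .untl φ.toLTL ψ.toLTL

/-- `SeqW T init ζ ρ υ t` is the set of predicate terms of `ρ` and update terms of `υ`
that hold at time `t` of the computation `ζ`. -/
def SeqW (T : Thy V F) (init : Assign V I C) (ζ : ℕ → Assign V I C)
    (ρ : Set (FTerm I C F)) (υ : Set (C × FTerm I C F)) : ℕ → Set (AP I C F) :=
  fun t => {a | Sum.elim
    (fun τ => τ ∈ ρ ∧ TSL.sat T init ζ (.pred τ) t)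
    (fun u => u ∈ υ ∧ TSL.sat T init ζ (.upd u.1 u.2) t) a}

/-! ### Program statements, matching, feasibility -/

/-- Basic program statements. -/
inductive Stmt0 (I C F : Type) : Type where
  | assert : FTerm I C F → Stmt0 I C F
  | assign : C → FTerm I C F → Stmt0 I C F
  | havoc : C → Stmt0 I C F

/-- Program statements: nonempty finite sequences of basic statements. -/
abbrev Stmt (I C F : Type) := {l : List (Stmt0 I C F) // l ≠ []}

/-- A computation matches a trace of basic statements at time `t`. -/
def matchesAt (T : Thy V F) (init : Assign V I C) (ζ : ℕ → Assign V I C)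
    (σ : ℕ → Stmt0 I C F) (t : ℕ) : Prop :=
  match σ t with
  | .assert τ => τ.eval T (prevA init ζ t) = T.vtrue ∧
      ∀ c : C, ζ t (.inr c) = prevA init ζ t (.inr c)
  | .assign c τ => ζ t (.inr c) = τ.eval T (prevA init ζ t) ∧
      ∀ c', c' ≠ c → ζ t (.inr c') = prevA init ζ t (.inr c')
  | .havoc c => ∀ c', c' ≠ c → ζ t (.inr c') = prevA init ζ t (.inr c')

/-- A computation matches a trace of basic statements. -/
def Matches (T : Thy V F) (init : Assign V I C) (ζ : ℕ → Assign V I C)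
    (σ : ℕ → Stmt0 I C F) : Prop :=
  ∀ t, matchesAt T init ζ σ t

/-- Position (index of the statement, offset inside it) of the `j`-th basic statement
in the flattening of a trace of composed statements. -/
def fpos (σ : ℕ → Stmt I C F) : ℕ → ℕ × ℕ
  | 0 => (0, 0)
  | j + 1 =>
    let p := fpos σ j
    if p.2 + 1 < ((σ p.1).1).length then (p.1, p.2 + 1) else (p.1 + 1, 0)

/-- The flattening of a trace of composed statements into basic statements. -/
def flatten (σ : ℕ → Stmt I C F) (j : ℕ) : Stmt0 I C F :=
  ((σ (fpos σ j).1).1).getD (fpos σ j).2 (((σ (fpos σ j).1).1).head (σ (fpos σ j).1).2)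

/-- A computation matches a trace of composed statements (via its flattening). -/
def MatchesC (T : Thy V F) (init : Assign V I C) (ζ : ℕ → Assign V I C)
    (σ : ℕ → Stmt I C F) : Prop :=
  Matches T init ζ (flatten σ)

/-- A trace of composed statements is feasible if some computation matches it. -/
def Feasible (T : Thy V F) (init : Assign V I C) (σ : ℕ → Stmt I C F) : Prop :=
  ∃ ζ, MatchesC T init ζ σ

/-- A trace of basic statements is feasible if some computation matches it. -/
def Feasible0 (T : Thy V F) (init : Assign V I C) (σ : ℕ → Stmt0 I C F) : Prop :=
  ∃ ζ, Matches T init ζ σ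

/-! ### Büchi automata -/

/-- A Büchi automaton. -/
structure Buchi (A : Type) (Q : Type) where
  q0 : Q
  δ : Q → A → Q → Prop
  Acc : Set Q

/-- A run of a Büchi automaton on a word. -/
def Buchi.IsRun {A Q : Type} (B : Buchi A Q) (σ : ℕ → A) (r : ℕ → Q) : Prop :=
  r 0 = B.q0 ∧ ∀ t, B.δ (r t) (σ t) (r (t + 1))

/-- Büchi acceptance: some run visits accepting states infinitely often. -/
def Buchi.Accepts {A Q : Type} (B : Buchi A Q) (σ : ℕ → A) : Prop :=
  ∃ r, B.IsRun σ r ∧ ∀ n, ∃ m, n ≤ m ∧ r m ∈ B.Acc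

/-- A program automaton over basic statements satisfies a TSL(T) formula if every
computation matching an accepted trace satisfies the formula. -/
def SatisfiesTSL {Qp : Type} (T : Thy V F) (init : Assign V I C)
    (P : Buchi (Stmt0 I C F) Qp) (φ : TSL I C F) : Prop :=
  ∀ σ, P.Accepts σ → ∀ ζ, Matches T init ζ σ → φ.sat T init ζ 0

/-! ### The combine construction and the Büchi program product -/

/-- Extended cell set: original cells, inputs-as-cells, and fresh `tmp` cells. -/
abbrev CStar (I C : Type) := (C ⊕ I) ⊕ ℕ

/-- Embedding of terms over inputs/cells into terms over the extended cell set. -/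
def FTerm.embed : FTerm I C F → FTerm Empty (CStar I C) F
  | .inp i => .cell (.inl (.inr i))
  | .cell c => .cell (.inl (.inl c))
  | .app f ts => .app f (ts.attach.map fun t => t.1.embed)
decreasing_by
  have := List.sizeOf_lt_of_mem t.2
  simp only [FTerm.app.sizeOf_spec]
  omega

/-- Embedding of basic statements into statements over the extended cell set. -/
def Stmt0.embed : Stmt0 I C F → Stmt0 Empty (CStar I C) F
  | .assert τ => .assert τ.embed
  | .assign c τ => .assign (.inl (.inl c)) τ.embed
  | .havoc c => .havoc (.inl (.inl c))

/-- Conjunction of a list of terms (via the theory's conjunction symbol). -/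
def conjTerm (T : Thy V F) (O : Ops V F T) :
    List (FTerm Empty (CStar I C) F) → FTerm Empty (CStar I C) F
  | [] => .app O.ftrue []
  | τ :: ts => .app O.fand [τ, conjTerm T O ts]

/-- The `combine` construction: `save_values; s; new_inputs; check_preds_l; check_updates_l`. -/
noncomputable def combine (T : Thy V F) (O : Ops V F T) (ρ : List (FTerm I C F))
    (υ : List (C × FTerm I C F)) (inps : List I)
    (s : List (Stmt0 I C F)) (l : Set (AP I C F)) : Stmt Empty (CStar I C) F :=
  ⟨(υ.mapIdx fun j u => Stmt0.assign (Sum.inr j) u.2.embed)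
    ++ s.map Stmt0.embed
    ++ (inps.map fun i => Stmt0.havoc (Sum.inl (Sum.inr i)))
    ++ [Stmt0.assert (conjTerm T O
          (ρ.map fun τ => if Sum.inl τ ∈ l then τ.embed else .app O.fneg [τ.embed])),
        Stmt0.assert (conjTerm T O
          (υ.mapIdx fun j u =>
            let eqt : FTerm Empty (CStar I C) F :=
              .app O.feq [.cell (Sum.inl (Sum.inl u.1)), .cell (Sum.inr j)]
            if Sum.inr u ∈ l then eqt else .app O.fneg [eqt]))],
    by simp⟩

/-- Lifting an automaton over basic statements to an automaton over (composed) statements. -/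
def liftB {Qp : Type} (P : Buchi (Stmt0 I C F) Qp) : Buchi (Stmt I C F) Qp where
  q0 := P.q0
  δ := fun q w q' => ∃ s, P.δ q s q' ∧ w = ⟨[s], by simp⟩
  Acc := P.Acc

/-- The combined product `P ⊗ A` of a program automaton and a Büchi automaton over
sets of predicate/update terms. -/
noncomputable def product {Qp Qa : Type} (T : Thy V F) (O : Ops V F T)
    (P : Buchi (Stmt I C F) Qp) (A : Buchi (Set (AP I C F)) Qa)
    (ρ : List (FTerm I C F)) (υ : List (C × FTerm I C F)) (inps : List I) :
    Buchi (Stmt Empty (CStar I C) F) (Qp × Qa) where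
  q0 := (P.q0, A.q0)
  δ := fun x w y => ∃ s l, P.δ x.1 s y.1 ∧ A.δ x.2 l y.2 ∧ w = combine T O ρ υ inps s.1 l
  Acc := {x | x.2 ∈ A.Acc}

/-! ### HyperTSL(T) -/

/-- HyperTSL(T) formulas: a quantifier prefix over trace variables, followed by a
quantifier-free formula over trace-indexed inputs and cells. -/
inductive HyperTSL (I C F Pi : Type) : Type where
  | qf : TSL (I × Pi) (C × Pi) F → HyperTSL I C F Pi
  | all : Pi → HyperTSL I C F Pi → HyperTSL I C F Pi
  | ex : Pi → HyperTSL I C F Pi → HyperTSL I C F Pi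

/-- Extension `ζ̂[π, ζ]` of a hyper-computation by a computation for trace variable `π`. -/
noncomputable def extendH (ζh : ℕ → Assign V (I × Pi) (C × Pi)) (π : Pi)
    (ζ : ℕ → Assign V I C) : ℕ → Assign V (I × Pi) (C × Pi) :=
  fun t x =>
    match x with
    | .inl (i, π') => if π' = π then ζ t (.inl i) else ζh t (.inl (i, π'))
    | .inr (c, π') => if π' = π then ζ t (.inr c) else ζh t (.inr (c, π'))

/-- Satisfaction of a HyperTSL(T) formula. -/
noncomputable def HyperTSL.sat (T : Thy V F) (init : Assign V (I × Pi) (C × Pi))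
    (Z : Set (ℕ → Assign V I C)) :
    HyperTSL I C F Pi → (ℕ → Assign V (I × Pi) (C × Pi)) → ℕ → Prop
  | .qf ψ, ζh, t => ψ.sat T init ζh t
  | .all π φ, ζh, t => ∀ ζ ∈ Z, φ.sat T init Z (extendH ζh π ζ) t
  | .ex π φ, ζh, t => ∃ ζ ∈ Z, φ.sat T init Z (extendH ζh π ζ) t

/-- Lift an assignment to a hyper-assignment (every trace gets the same values). -/
def liftInit (init : Assign V I C) : Assign V (I × Pi) (C × Pi) :=
  fun x => match x with
  | .inl (i, _) => init (.inl i)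
  | .inr (c, _) => init (.inr c)

/-- The set of computations matching accepted traces of a program automaton. -/
def Zof {Qp : Type} (T : Thy V F) (init : Assign V I C)
    (P : Buchi (Stmt0 I C F) Qp) : Set (ℕ → Assign V I C) :=
  {ζ | ∃ σ, P.Accepts σ ∧ Matches T init ζ σ}

/-- A program automaton satisfies a HyperTSL(T) formula. -/
noncomputable def SatisfiesHyper {Qp : Type} (T : Thy V F) (init : Assign V I C)
    (P : Buchi (Stmt0 I C F) Qp) (φ : HyperTSL I C F Pi) : Prop :=
  φ.sat T (liftInit init) (Zof T init P) (fun _ => liftInit init) 0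

/-- Renaming of terms: cell `c` becomes `c_π`, input `i` becomes `i_π`. -/
def FTerm.rename (π : Pi) : FTerm I C F → FTerm (I × Pi) (C × Pi) F
  | .inp i => .inp (i, π)
  | .cell c => .cell (c, π)
  | .app f ts => .app f (ts.attach.map fun t => t.1.rename π)
decreasing_by
  have := List.sizeOf_lt_of_mem t.2
  simp only [FTerm.app.sizeOf_spec]
  omega

/-- Renaming of basic statements to a trace variable. -/
def Stmt0.rename (π : Pi) : Stmt0 I C F → Stmt0 (I × Pi) (C × Pi) F
  | .assert τ => .assert (τ.rename π)
  | .assign c τ => .assign (c, π) (τ.rename π)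
  | .havoc c => .havoc (c, π)

/-- The `n`-fold self-composition of a program automaton. -/
def selfComp {Qp : Type} (P : Buchi (Stmt0 I C F) Qp) (n : ℕ) :
    Buchi (Stmt (I × Fin n) (C × Fin n) F) (Fin n → Qp) where
  q0 := fun _ => P.q0
  δ := fun q w q' => ∃ ss : Fin n → Stmt0 I C F,
        (∀ j, P.δ (q j) (ss j) (q' j)) ∧
        w.1 = (List.finRange n).map fun j => (ss j).rename j
  Acc := Set.univ

/-- The `m`-fold self-composition, using the first `m` of `n` trace variables. -/
def selfCompInto {Qp : Type} (P : Buchi (Stmt0 I C F) Qp) (m n : ℕ) (h : m ≤ n) :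
    Buchi (Stmt (I × Fin n) (C × Fin n) F) (Fin m → Qp) where
  q0 := fun _ => P.q0
  δ := fun q w q' => ∃ ss : Fin m → Stmt0 I C F,
        (∀ j, P.δ (q j) (ss j) (q' j)) ∧
        w.1 = (List.finRange m).map fun j => (ss j).rename (Fin.castLE h j)
  Acc := Set.univ

end TSLMC

/-! ### k-feasibility and the automaton `P_k` -/

namespace TSLMC
open scoped Classical
variable {V I C F Pi : Type}

/-- The statement `assert(true)`. -/
def trueStmt (T : Thy V F) (O : Ops V F T) : Stmt I C F :=
  ⟨[.assert (.app O.ftrue [])], by simp⟩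

/-- Extend a finite window of statements by `assert(true)^ω`. -/
def extendTrue (T : Thy V F) (O : Ops V F T) (ss : List (Stmt I C F)) : ℕ → Stmt I C F :=
  fun t => if h : t < ss.length then ss.get ⟨t, h⟩ else trueStmt T O

/-- A finite window of statements is feasible if, followed by `assert(true)^ω`, it is
feasible for some initial assignment. -/
def WinFeasible (T : Thy V F) (O : Ops V F T) (ss : List (Stmt I C F)) : Prop :=
  ∃ init : Assign V I C, Feasible T init (extendTrue T O ss)

/-- The window `σ_j … σ_{j+k-1}` of a trace. -/
def window (σ : ℕ → α) (j k : ℕ) : List α :=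
  (List.range k).map fun i => σ (j + i)

/-- A trace is `k`-feasible if no window of `k` consecutive statements is infeasible
for all initial assignments. -/
def KFeasible (T : Thy V F) (O : Ops V F T) (k : ℕ) (σ : ℕ → Stmt I C F) : Prop :=
  ∀ j, WinFeasible T O (window σ j k)

/-- Chains of transitions of an automaton. -/
def chain {S Qp : Type} (P : Buchi S Qp) : Qp → List (S × Qp) → Prop
  | _, [] => True
  | q, (s, q') :: rest => P.δ q s q' ∧ chain P q' rest

/-- The last state of an alternating state/statement sequence. -/
def lastQ {S Qp : Type} (st : Qp × List (S × Qp)) : Qp :=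
  (st.2.getLast?).elim st.1 Prod.snd

/-- The statements of an alternating state/statement sequence. -/
def stmts {S Qp : Type} (st : Qp × List (S × Qp)) : List S :=
  st.2.map Prod.fst

/-- Valid states of `P_k`: chains of transitions of `P` of length `k-1`, or shorter
ones starting at the initial state. -/
def ValidSt {S Qp : Type} (P : Buchi S Qp) (k : ℕ) (st : Qp × List (S × Qp)) : Prop :=
  chain P st.1 st.2 ∧ (st.2.length = k - 1 ∨ (st.2.length < k - 1 ∧ st.1 = P.q0))

/-- Extend an alternating sequence by a transition, dropping the first entry if the
window is full. -/
def push {S Qp : Type} (k : ℕ) (st : Qp × List (S × Qp)) (s : S) (q' : Qp) :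
    Qp × List (S × Qp) :=
  let l' := st.2 ++ [(s, q')]
  if k ≤ l'.length then
    match l' with
    | [] => (st.1, [])
    | e :: rest => (e.2, rest)
  else (st.1, l')

/-- The automaton `P_k`: `P` without `k`-infeasibility. -/
def Pk {Qp : Type} (T : Thy V F) (O : Ops V F T) (P : Buchi (Stmt I C F) Qp) (k : ℕ) :
    Buchi (Stmt I C F) (Qp × List (Stmt I C F × Qp)) where
  q0 := (P.q0, [])
  δ := fun st s st' => ValidSt P k st ∧ ValidSt P k st' ∧
        ∃ q', P.δ (lastQ st) s q' ∧ WinFeasible T O (stmts st ++ [s]) ∧ st' = push k st s q'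
  Acc := {st | lastQ st ∈ P.Acc}

/-! ### Infeasible accepting cycles and their removal -/

/-- The trace `(s₁ … s_n)^ω` of a cycle. -/
def cycTrace (T : Thy V F) (O : Ops V F T) {Qp : Type}
    (ϱ : List (Qp × Stmt I C F × Qp)) : ℕ → Stmt I C F :=
  fun t => ((ϱ[t % ϱ.length]?).map fun e => e.2.1).getD (trueStmt T O)

/-- `ϱ` is a cycle of transitions of `B`. -/
def IsCycle {S Qp : Type} (B : Buchi S Qp) (ϱ : List (Qp × S × Qp)) : Prop :=
  ϱ ≠ [] ∧ (∀ e ∈ ϱ, B.δ e.1 e.2.1 e.2.2) ∧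
  (∀ i, (h : i + 1 < ϱ.length) →
    (ϱ.get ⟨i + 1, h⟩).1 = (ϱ.get ⟨i, Nat.lt_of_succ_lt h⟩).2.2) ∧
  ∀ h : ϱ ≠ [], (ϱ.getLast h).2.2 = (ϱ.head h).1

/-- An infeasible accepting cycle. -/
def InfAccCycle {Qp : Type} (T : Thy V F) (O : Ops V F T)
    (B : Buchi (Stmt I C F) Qp) (ϱ : List (Qp × Stmt I C F × Qp)) : Prop :=
  IsCycle B ϱ ∧ (∃ e ∈ ϱ, e.1 ∈ B.Acc) ∧
  ∀ init : Assign V I C, ¬ Feasible T init (cycTrace T O ϱ)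

/-- A trace ends with the infinite repetition of the statements of the cycle `ϱ`. -/
def EndsWithCyc {Qp : Type} (T : Thy V F) (O : Ops V F T)
    (σ : ℕ → Stmt I C F) (ϱ : List (Qp × Stmt I C F × Qp)) : Prop :=
  ∃ N, ∀ j, σ (N + j) = cycTrace T O ϱ j

/-- The automaton `A_ϱ`, accepting exactly the traces ending with `ϱ^ω`. -/
def cycAut {Qp : Type} (ϱ : List (Qp × Stmt I C F × Qp)) :
    Buchi (Stmt I C F) (Option (Fin ϱ.length)) where
  q0 := none
  δ := fun st s st' =>
    match st with
    | none => st' = none ∨ ∃ h : ϱ ≠ [],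
        s = (ϱ.head h).2.1 ∧
        st' = some ⟨1 % ϱ.length, Nat.mod_lt _ (List.length_pos_iff.mpr h)⟩
    | some i => s = (ϱ.get i).2.1 ∧
        st' = some ⟨((i : ℕ) + 1) % ϱ.length,
          Nat.mod_lt _ (Nat.lt_of_le_of_lt (Nat.zero_le _) i.isLt)⟩
  Acc := {st | st ≠ none}

/-- A Büchi automaton bundled with its state type. -/
structure BAut (A : Type) : Type 1 where
  Q : Type
  B : Buchi A Q

/-- One removal step: remove (the languages of the automata `A_ϱ` for) a set of
infeasible accepting cycles from an automaton. -/
def RemStep (T : Thy V F) (O : Ops V F T) (x y : BAut (Stmt I C F)) : Prop :=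
  ∃ Cset : Set (List (x.Q × Stmt I C F × x.Q)),
    (∀ ϱ ∈ Cset, InfAccCycle T O x.B ϱ) ∧
    ∀ σ, y.B.Accepts σ ↔ (x.B.Accepts σ ∧ ∀ ϱ ∈ Cset, ¬ EndsWithCyc T O σ ϱ)

/-- `k'` iterations of removing infeasible accepting cycles. -/
def RemChain (T : Thy V F) (O : Ops V F T) :
    ℕ → BAut (Stmt I C F) → BAut (Stmt I C F) → Prop
  | 0, x, y => y = x
  | k' + 1, x, y => ∃ z, RemChain T O k' x z ∧ RemStep T O z y

/-- The universal projection of (a refinement of) the combined product: keep the first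
`m` of the `n` statements of each `combine`-labelled transition. -/
noncomputable def projU {Q' : Type} (T : Thy V F) (O : Ops V F T) {m n : ℕ}
    (_hm : 0 < m) (hmn : m ≤ n)
    (ρ : List (FTerm (I × Fin n) (C × Fin n) F))
    (υ : List ((C × Fin n) × FTerm (I × Fin n) (C × Fin n) F))
    (inps : List (I × Fin n))
    (B : Buchi (Stmt Empty (CStar (I × Fin n) (C × Fin n)) F) Q') :
    Buchi (Stmt (I × Fin n) (C × Fin n) F) Q' where
  q0 := B.q0
  δ := fun q w q' => ∃ (ss : Fin n → Stmt0 (I × Fin n) (C × Fin n) F)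
        (l : Set (AP (I × Fin n) (C × Fin n) F)),
        B.δ q (combine T O ρ υ inps ((List.finRange n).map ss) l) q' ∧
        w.1 = (List.finRange m).map fun j => ss (Fin.castLE hmn j)
  Acc := B.Acc

/-- The formula `∀π₁ … ∀π_m ∃π_{m+1} … ∃π_n. ψ`. -/
def AEform (m n : ℕ) (ψ : TSL (I × Fin n) (C × Fin n) F) : HyperTSL I C F (Fin n) :=
  (List.finRange n).foldr
    (fun (j : Fin n) acc => if (j : ℕ) < m then HyperTSL.all j acc else HyperTSL.ex j acc)
    (.qf ψ)

end TSLMC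
/-! ### Reduced and adapted computations -/

namespace TSLMC
open scoped Classical
variable {V I C F Pi : Type}

/-- The index `ι(t) = B·(t+1) − 3` for blocks of length `B`. -/
def iotaIdx (B t : ℕ) : ℕ := B * (t + 1) - 3

/-- The reduced computation: the combined computation at the indices `ι(t)`,
restricted to the original inputs and cells. -/
def reduceC (B : ℕ) (ζ : ℕ → Assign V Empty (CStar I C)) : ℕ → Assign V I C :=
  fun t x => ζ (iotaIdx B t) (.inr (.inl x.swap))

/-- The reduced computation of trace variable `j`: the combined hyper-computation at
the indices `ι(t)`, restricted to the `j`-indexed inputs and cells, renamed back. -/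
def reduceTr {n : ℕ} (B : ℕ) (j : Fin n)
    (ζ : ℕ → Assign V Empty (CStar (I × Fin n) (C × Fin n))) : ℕ → Assign V I C :=
  fun t x => ζ (iotaIdx B t)
    (.inr (.inl (match x with | .inl i => .inr (i, j) | .inr c => .inl (c, j))))

/-- Assembling a hyper-computation from one computation per trace variable
(`∅[π₁, ζ₁]…[π_n, ζ_n]`). -/
def assembleH {n : ℕ} (red : Fin n → ℕ → Assign V I C) :
    ℕ → Assign V (I × Fin n) (C × Fin n) :=
  fun t x => match x with
  | .inl (i, j) => red j t (.inl i)
  | .inr (c, j) => red j t (.inr c)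

/-- The adapted computation `ζ̃` of a computation `ζ`. -/
noncomputable def adapt (T : Thy V F) (upds : List (C × FTerm I C F)) (inps : List I)
    (init : Assign V I C) (initC : Assign V Empty (CStar I C))
    (ζ : ℕ → Assign V I C) : ℕ → Assign V Empty (CStar I C) := fun idx x =>
  let m := upds.length
  let k := inps.length
  let b := idx / (m + k + 3)
  let i := idx % (m + k + 3)
  let newTmp : ℕ → V := fun p =>
    ((upds[p]?).map fun u => u.2.eval T (prevA init ζ b)).getD (initC (.inr (.inr p)))
  let oldTmp : ℕ → V := fun p =>
    match b with
    | 0 => initC (.inr (.inr p))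
    | b' + 1 => ((upds[p]?).map fun u => u.2.eval T (prevA init ζ b')).getD
        (initC (.inr (.inr p)))
  match x with
  | .inl e => e.elim
  | .inr (.inr p) => if i < m then (if p ≤ i then newTmp p else oldTmp p) else newTmp p
  | .inr (.inl (.inl c)) => if i < m then prevA init ζ b (.inr c) else ζ b (.inr c)
  | .inr (.inl (.inr ii)) =>
      if i < m + 1 then prevA init ζ b (.inl ii)
      else if i ≤ m + k then
        (if inps.idxOf ii < i - m then ζ b (.inl ii) else prevA init ζ b (.inl ii))
      else ζ b (.inl ii)

/-- The adapted hyper-computation of computations `ζ_{π₁}, …, ζ_{π_n}`. -/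
noncomputable def hadapt {n : ℕ} (T : Thy V F)
    (upds : List ((C × Fin n) × FTerm (I × Fin n) (C × Fin n) F))
    (inps : List (I × Fin n)) (init : Assign V I C)
    (initC : Assign V Empty (CStar (I × Fin n) (C × Fin n)))
    (ζs : Fin n → ℕ → Assign V I C) :
    ℕ → Assign V Empty (CStar (I × Fin n) (C × Fin n)) := fun idx x =>
  let m := upds.length
  let k := inps.length
  let b := idx / (m + n + k + 2)
  let i := idx % (m + n + k + 2)
  let ζ' : ℕ → Assign V (I × Fin n) (C × Fin n) := assembleH ζs
  let hinit : Assign V (I × Fin n) (C × Fin n) := liftInit init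
  let newTmp : ℕ → V := fun p =>
    ((upds[p]?).map fun u => u.2.eval T (prevA hinit ζ' b)).getD (initC (.inr (.inr p)))
  let oldTmp : ℕ → V := fun p =>
    match b with
    | 0 => initC (.inr (.inr p))
    | b' + 1 => ((upds[p]?).map fun u => u.2.eval T (prevA hinit ζ' b')).getD
        (initC (.inr (.inr p)))
  match x with
  | .inl e => e.elim
  | .inr (.inr p) => if i < m then (if p ≤ i then newTmp p else oldTmp p) else newTmp p
  | .inr (.inl (.inl cj)) =>
      if i < m then prevA hinit ζ' b (.inr cj)
      else if i < m + n then
        (if (cj.2 : ℕ) < i - m + 1 then ζs cj.2 b (.inr cj.1)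
         else prevA hinit ζ' b (.inr cj))
      else ζ' b (.inr cj)
  | .inr (.inl (.inr ij)) =>
      if i < m + n then prevA hinit ζ' b (.inl ij)
      else if i < m + n + k then
        (if inps.idxOf ij < i - (m + n) + 1 then ζ' b (.inl ij)
         else prevA hinit ζ' b (.inl ij))
      else ζ' b (.inl ij)

/-- The composed trace `σ_t = ((σ_{π₁})_{π₁})_t; … ; ((σ_{π_n})_{π_n})_t`. -/
def composedTrace {n : ℕ} (σs : Fin n → ℕ → Stmt0 I C F) (t : ℕ) :
    List (Stmt0 (I × Fin n) (C × Fin n) F) :=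
  (List.finRange n).map fun j => (σs j t).rename j

/-- The composed trace, as a trace of (nonempty) program statements. -/
def composedStmt {n : ℕ} (hn : 0 < n) (σs : Fin n → ℕ → Stmt0 I C F) (t : ℕ) :
    Stmt (I × Fin n) (C × Fin n) F :=
  ⟨composedTrace σs t, by
    intro h
    have := congrArg List.length h
    simp [composedTrace] at this
    omega⟩

end TSLMC

namespace TSLMC
open scoped Classical

section EqAdaptAux

variable {V I C F : Type}

lemma eval_app' (T : Thy V F) (a : Assign V I C) (f : F) (ts : List (FTerm I C F)) :
    FTerm.eval T a (.app f ts) = T.ε f (ts.map (FTerm.eval T a)) := by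
  rw [FTerm.eval]
  congr 1
  simp

def restrA (a : Assign V Empty (CStar I C)) : Assign V I C :=
  fun x => a (.inr (.inl x.swap))

lemma embed_eval (T : Thy V F) :
    ∀ (τ : FTerm I C F) (a : Assign V Empty (CStar I C)),
      FTerm.eval T a τ.embed = FTerm.eval T (restrA a) τ := by
  suffices h : ∀ (n : ℕ) (τ : FTerm I C F), sizeOf τ ≤ n →
      ∀ a, FTerm.eval T a τ.embed = FTerm.eval T (restrA a) τ from
    fun τ a => h (sizeOf τ) τ le_rfl a
  intro n
  induction n with
  | zero =>
    intro τ hτ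
    exfalso
    cases τ <;> simp at hτ
  | succ n ih =>
    intro τ hτ a
    cases τ with
    | inp i => simp [FTerm.embed, FTerm.eval, restrA]
    | cell c => simp [FTerm.embed, FTerm.eval, restrA]
    | app f ts =>
      rw [FTerm.embed, eval_app', eval_app', List.map_map]
      congr 1
      have hr : ts.map (FTerm.eval T (restrA a)) =
          ts.attach.map (fun t => FTerm.eval T (restrA a) t.1) := by simp
      rw [hr]
      apply List.map_congr_left
      intro t _
      have h1 := List.sizeOf_lt_of_mem t.2
      have h2 : sizeOf (FTerm.app f ts) = 1 + sizeOf f + sizeOf ts := by simp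
      exact ih t.1 (by omega) a

def touches : Stmt0 I C F → C → Prop
  | .assert _, _ => False
  | .assign c _, y => c = y
  | .havoc c, y => c = y

lemma unchanged_step (T : Thy V F) (init : Assign V I C) (ζ : ℕ → Assign V I C)
    (σ' : ℕ → Stmt0 I C F) (hm : Matches T init ζ σ') (j : ℕ) (y : C)
    (hy : ¬ touches (σ' j) y) : ζ j (.inr y) = prevA init ζ j (.inr y) := by
  have hj := hm j
  unfold matchesAt at hj
  cases hs : σ' j with
  | assert τ =>
    rw [hs] at hj
    exact hj.2 y
  | assign c τ =>
    rw [hs] at hj hy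
    simp only [touches] at hy
    exact hj.2 y fun hh => hy hh.symm
  | havoc c =>
    rw [hs] at hj hy
    simp only [touches] at hy
    exact hj y fun hh => hy hh.symm

lemma prev_const (T : Thy V F) (init : Assign V I C) (ζ : ℕ → Assign V I C)
    (σ' : ℕ → Stmt0 I C F) (hm : Matches T init ζ σ') (y : C) (a b : ℕ) (hab : a ≤ b)
    (hj : ∀ j, a ≤ j → j < b → ¬ touches (σ' j) y) :
    prevA init ζ b (.inr y) = prevA init ζ a (.inr y) := by
  obtain ⟨d, rfl⟩ : ∃ d, b = a + d := ⟨b - a, by omega⟩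
  clear hab
  induction d with
  | zero => rfl
  | succ d ih =>
    have h1 : prevA init ζ (a + (d + 1)) (.inr y) = ζ (a + d) (.inr y) := rfl
    rw [h1, unchanged_step T init ζ σ' hm (a + d) y (hj _ (by omega) (by omega))]
    exact ih fun j hj1 hj2 => hj j hj1 (by omega)

lemma mmod (B b i : ℕ) (h : i < B) : (B * b + i) % B = i := by
  rw [Nat.add_comm, Nat.add_mul_mod_self_left, Nat.mod_eq_of_lt h]

lemma mdiv (B b i : ℕ) (h : i < B) : (B * b + i) / B = b := by
  rw [Nat.add_comm, Nat.add_mul_div_left _ _ (by omega : 0 < B), Nat.div_eq_of_lt h,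
    Nat.zero_add]

end EqAdaptAux


end TSLMC

namespace TSLMC
open scoped Classical
theorem eq_adapt_of_reduce
    {V I C F : Type} (T : Thy V F) (O : Ops V F T)
    (init : Assign V I C) (initC : Assign V Empty (CStar I C))
    (hic : ∀ c : C, initC (.inr (.inl (.inl c))) = init (.inr c))
    (hii : ∀ i : I, initC (.inr (.inl (.inr i))) = init (.inl i))
    (ρ : List (FTerm I C F)) (υ : List (C × FTerm I C F))
    (inps : List I) (hinps : ∀ i : I, i ∈ inps) (hnd : inps.Nodup)
    (σ : ℕ → Stmt0 I C F) (X : ℕ → Set (AP I C F))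
    (ζ : ℕ → Assign V Empty (CStar I C))
    (h : MatchesC T initC ζ (fun t => combine T O ρ υ inps [σ t] (X t))) :
    ζ = adapt T υ inps init initC (reduceC (inps.length + υ.length + 3) ζ) := by
  classical
  obtain ⟨B, hB⟩ : ∃ B, B = υ.length + inps.length + 3 := ⟨_, rfl⟩
  have hBpos : 0 < B := by omega
  rw [show inps.length + υ.length + 3 = B from by omega]
  set combσ : ℕ → Stmt Empty (CStar I C) F := fun t => combine T O ρ υ inps [σ t] (X t)
    with hcomb
  have hM : Matches T initC ζ (flatten combσ) := h
  have hlen : ∀ t, ((combσ t).1).length = B := by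
    intro t
    simp [hcomb, combine]
    omega
  -- fpos for constant-length statements
  have hfpos : ∀ j, fpos combσ j = (j / B, j % B) := by
    intro j
    induction j with
    | zero => simp [fpos]
    | succ j ih =>
      have hmlt : j % B < B := Nat.mod_lt _ hBpos
      simp only [fpos, ih, hlen]
      by_cases hc : j % B + 1 < B
      · rw [if_pos hc]
        have h1 : j + 1 = B * (j / B) + (j % B + 1) := by
          have := Nat.div_add_mod j B
          omega
        rw [h1, mmod _ _ _ hc, mdiv _ _ _ hc]
      · rw [if_neg hc]
        have hms : B * (j / B + 1) = B * (j / B) + B := Nat.mul_succ _ _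
        have h1 : j + 1 = B * (j / B + 1) + 0 := by
          have := Nat.div_add_mod j B
          omega
        rw [h1, mmod _ _ _ hBpos, mdiv _ _ _ hBpos]
  have hget : ∀ (b i : ℕ) (hi : i < B),
      flatten combσ (B * b + i) = ((combσ b).1)[i]'(by rw [hlen]; exact hi) := by
    intro b i hi
    have h1 : flatten combσ (B * b + i) =
        ((combσ b).1).getD i (((combσ b).1).head (combσ b).2) := by
      simp only [flatten, hfpos, mmod _ _ _ hi, mdiv _ _ _ hi]
    rw [h1]
    exact List.getD_eq_getElem _ _ _
  -- the statements of the combined trace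
  have hstm0 : ∀ (b i : ℕ) (hi : i < υ.length),
      flatten combσ (B * b + i) = .assign (.inr i) ((υ[i]'hi).2.embed) := by
    intro b i hi
    rw [hget b i (by omega)]
    simp [hcomb, combine, List.getElem_append, hi]
  have hstm1 : ∀ b : ℕ, flatten combσ (B * b + υ.length) = Stmt0.embed (σ b) := by
    intro b
    rw [hget b υ.length (by omega)]
    simp [hcomb, combine, List.getElem_append]
  have hstm2 : ∀ (b r : ℕ) (hr : r < inps.length),
      flatten combσ (B * b + (υ.length + 1 + r)) = .havoc (.inl (.inr (inps[r]'hr))) := by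
    intro b r hr
    rw [hget b _ (by omega)]
    simp [hcomb, combine, List.getElem_append, hr]
    rw [dif_neg (by omega)]
    simp only [show υ.length + 1 + r - υ.length = r + 1 from by omega,
      List.getElem_cons_succ]
    simp [List.getElem_append, hr]
  have hstm3 : ∀ (b i : ℕ), υ.length + inps.length + 1 ≤ i → i < B →
      ∃ τ, flatten combσ (B * b + i) = .assert τ := by
    intro b i h1 h2
    obtain ⟨e, he2, rfl⟩ : ∃ e, e < 2 ∧ i = υ.length + 1 + inps.length + e :=
      ⟨i - (υ.length + 1 + inps.length), by omega, by omega⟩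
    rw [hget b _ h2]
    simp [hcomb, combine, List.getElem_append]
    rw [dif_neg (by omega)]
    simp only [show υ.length + 1 + inps.length + e - υ.length = (inps.length + e) + 1
      from by omega, List.getElem_cons_succ, List.getElem_append]
    rw [dif_neg (by simp)]
    simp only [List.length_map, show inps.length + e - inps.length = e from by omega]
    rcases (show e = 0 ∨ e = 1 from by omega) with rfl | rfl
    · simp
    · simp
  -- classification of touched cells
  have tcases : ∀ (j : ℕ) (y : CStar I C), touches (flatten combσ j) y →
      (j % B < υ.length ∧ y = Sum.inr (j % B)) ∨
      (j % B = υ.length ∧ ∃ c : C, y = Sum.inl (Sum.inl c)) ∨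
      (∃ r, ∃ hr : r < inps.length, j % B = υ.length + 1 + r ∧
        y = Sum.inl (Sum.inr (inps[r]'hr))) := by
    intro j y ht
    have hdm := Nat.div_add_mod j B
    have hmlt : j % B < B := Nat.mod_lt _ hBpos
    rw [← hdm] at ht
    rcases Nat.lt_trichotomy (j % B) υ.length with h1 | h1 | h1
    · rw [hstm0 (j / B) (j % B) h1] at ht
      simp only [touches] at ht
      exact Or.inl ⟨h1, ht.symm⟩
    · rw [h1, hstm1 (j / B)] at ht
      refine Or.inr (Or.inl ⟨h1, ?_⟩)
      cases hσ : σ (j / B) with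
      | assert τ => rw [hσ] at ht; simp [Stmt0.embed, touches] at ht
      | assign c τ =>
        rw [hσ] at ht
        simp only [Stmt0.embed, touches] at ht
        exact ⟨c, ht.symm⟩
      | havoc c =>
        rw [hσ] at ht
        simp only [Stmt0.embed, touches] at ht
        exact ⟨c, ht.symm⟩
    · by_cases h2 : j % B < υ.length + 1 + inps.length
      · obtain ⟨r, hr, hjr⟩ : ∃ r, ∃ _ : r < inps.length, j % B = υ.length + 1 + r :=
          ⟨j % B - υ.length - 1, by omega, by omega⟩
        rw [hjr, hstm2 (j / B) r hr] at ht
        simp only [touches] at ht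
        exact Or.inr (Or.inr ⟨r, hr, hjr, ht.symm⟩)
      · obtain ⟨τ, hτ⟩ := hstm3 (j / B) (j % B) (by omega) hmlt
        rw [hτ] at ht
        exact absurd ht (by simp [touches])
  have unch : ∀ (a bnd : ℕ) (y : CStar I C), a ≤ bnd →
      (∀ j, a ≤ j → j < bnd → ¬ touches (flatten combσ j) y) →
      prevA initC ζ bnd (.inr y) = prevA initC ζ a (.inr y) :=
    fun a bnd y h1 h2 => prev_const T initC ζ _ hM y a bnd h1 h2
  have hmodw : ∀ (b j : ℕ), B * b ≤ j → j < B * b + B → j % B = j - B * b := by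
    intro b j h1 h2
    have h3 : j = B * b + (j - B * b) := by omega
    rw [h3, mmod _ _ _ (by omega)]
    omega
  -- constancy within a single block window
  have wconst : ∀ (y : CStar I C) (b lo hi : ℕ), lo ≤ hi → hi ≤ B →
      (∀ i, lo ≤ i → i < hi →
        (i < υ.length → y ≠ .inr i) ∧
        (i = υ.length → ∀ c : C, y ≠ .inl (.inl c)) ∧
        (∀ r (hr : r < inps.length), i = υ.length + 1 + r →
          y ≠ .inl (.inr (inps[r]'hr)))) →
      prevA initC ζ (B * b + hi) (.inr y) = prevA initC ζ (B * b + lo) (.inr y) := by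
    intro y b lo hi h1 h2 hsafe
    apply unch _ _ _ (by omega)
    intro j hj1 hj2 ht
    have hjm : j % B = j - B * b := hmodw b j (by omega) (by omega)
    rcases tcases j y ht with ⟨ha, hb'⟩ | ⟨ha, c, hb'⟩ | ⟨r, hr, ha, hb'⟩
    · exact (hsafe (j % B) (by omega) (by omega)).1 ha hb'
    · exact (hsafe (j % B) (by omega) (by omega)).2.1 ha c hb'
    · exact (hsafe (j % B) (by omega) (by omega)).2.2 r hr ha hb'
  have idxu : ∀ (ii : I) (r : ℕ) (hr : r < inps.length), inps[r]'hr = ii →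
      r = inps.idxOf ii := by
    intro ii r hr hh
    have hlt : inps.idxOf ii < inps.length := List.idxOf_lt_length_iff.mpr (hinps ii)
    have h2 : inps[inps.idxOf ii]'hlt = ii := List.getElem_idxOf hlt
    exact (List.Nodup.getElem_inj_iff hnd).mp (hh.trans h2.symm)
  -- the reduced computation
  have hredi : ∀ (b : ℕ) (ii : I), reduceC B ζ b (.inl ii) =
      ζ (B * b + (υ.length + inps.length)) (.inr (.inl (.inr ii))) := by
    intro b ii
    have hι : iotaIdx B b = B * b + (υ.length + inps.length) := by
      have hms : B * (b + 1) = B * b + B := Nat.mul_succ _ _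
      simp only [iotaIdx]
      omega
    simp only [reduceC, hι, Sum.swap_inl]
  have hredc : ∀ (b : ℕ) (c : C), reduceC B ζ b (.inr c) =
      ζ (B * b + (υ.length + inps.length)) (.inr (.inl (.inl c))) := by
    intro b c
    have hι : iotaIdx B b = B * b + (υ.length + inps.length) := by
      have hms : B * (b + 1) = B * b + B := Nat.mul_succ _ _
      simp only [iotaIdx]
      omega
    simp only [reduceC, hι, Sum.swap_inr]
  -- the restriction of the state just before reading inputs/cells in a block
  have hrestr : ∀ (b p : ℕ), p ≤ υ.length →
      restrA (prevA initC ζ (B * b + p)) = prevA init (reduceC B ζ) b := by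
    intro b p hp
    funext x
    have hsafe : ∀ i, 0 ≤ i → i < p →
        (i < υ.length → (Sum.inl x.swap : CStar I C) ≠ .inr i) ∧
        (i = υ.length → ∀ c : C, (Sum.inl x.swap : CStar I C) ≠ .inl (.inl c)) ∧
        (∀ r (hr : r < inps.length), i = υ.length + 1 + r →
          (Sum.inl x.swap : CStar I C) ≠ .inl (.inr (inps[r]'hr))) := by
      intro i hi1 hi2
      refine ⟨fun _ => by simp, fun hi3 _ => by omega, fun r hr hi3 => by omega⟩
    have hsafe2 : ∀ i, υ.length + inps.length + 1 ≤ i → i < B →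
        (i < υ.length → (Sum.inl x.swap : CStar I C) ≠ .inr i) ∧
        (i = υ.length → ∀ c : C, (Sum.inl x.swap : CStar I C) ≠ .inl (.inl c)) ∧
        (∀ r (hr : r < inps.length), i = υ.length + 1 + r →
          (Sum.inl x.swap : CStar I C) ≠ .inl (.inr (inps[r]'hr))) := by
      intro i hi1 hi2
      refine ⟨fun h' => by omega, fun h' _ => by omega, fun r hr h' => by omega⟩
    have hx : restrA (prevA initC ζ (B * b + p)) x =
        prevA initC ζ (B * b + p) (.inr (.inl x.swap)) := rfl
    rw [hx]
    cases b with
    | zero =>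
      have h0 : prevA initC ζ (B * 0 + p) (.inr (.inl x.swap)) =
          prevA initC ζ (B * 0 + 0) (.inr (.inl x.swap)) :=
        wconst _ 0 0 p (by omega) (by omega) hsafe
      rw [h0, show B * 0 + 0 = 0 from by omega]
      cases x with
      | inl ii => exact hii ii
      | inr c => exact hic c
    | succ b' =>
      have hms : B * (b' + 1) = B * b' + B := Nat.mul_succ _ _
      have h0 : prevA initC ζ (B * (b' + 1) + p) (.inr (.inl x.swap)) =
          prevA initC ζ (B * (b' + 1) + 0) (.inr (.inl x.swap)) :=
        wconst _ (b' + 1) 0 p (by omega) (by omega) hsafe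
      have h1 : prevA initC ζ (B * (b' + 1) + 0) (.inr (.inl x.swap)) =
          prevA initC ζ (B * b' + (υ.length + inps.length + 1)) (.inr (.inl x.swap)) := by
        rw [show B * (b' + 1) + 0 = B * b' + B from by omega]
        exact wconst _ b' (υ.length + inps.length + 1) B (by omega) (by omega) hsafe2
      rw [h0, h1]
      have h2 : prevA initC ζ (B * b' + (υ.length + inps.length + 1))
          (.inr (.inl x.swap)) =
          ζ (B * b' + (υ.length + inps.length)) (.inr (.inl x.swap)) := rfl
      rw [h2]
      cases x with
      | inl ii => exact (hredi b' ii).symm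
      | inr c => exact (hredc b' c).symm
  -- cell values in the second part of a block
  have Lcell : ∀ (b i : ℕ) (c : C), υ.length ≤ i → i < B →
      ζ (B * b + i) (.inr (.inl (.inl c))) = reduceC B ζ b (.inr c) := by
    intro b i c h1 h2
    rw [hredc]
    have e1 : ζ (B * b + i) (.inr (.inl (.inl c))) =
        prevA initC ζ (B * b + (i + 1)) (.inr (.inl (.inl c))) := rfl
    have e2 : ζ (B * b + (υ.length + inps.length)) (.inr (.inl (.inl c))) =
        prevA initC ζ (B * b + (υ.length + inps.length + 1))
          (.inr (.inl (.inl c))) := rfl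
    rw [e1, e2]
    rcases le_or_gt (i + 1) (υ.length + inps.length + 1) with hc | hc
    · exact (wconst _ b (i + 1) (υ.length + inps.length + 1) (by omega) (by omega)
        (by
          intro i' hi1 hi2
          exact ⟨fun h' => by omega, fun h' _ => by omega,
            fun r hr h' => by simp⟩)).symm
    · exact wconst _ b (υ.length + inps.length + 1) (i + 1) (by omega) (by omega)
        (by
          intro i' hi1 hi2
          exact ⟨fun h' => by omega, fun h' => by omega, fun r hr h' => by omega⟩)
  -- input values after their havoc
  have Linew : ∀ (b i : ℕ) (ii : I), υ.length + 1 + inps.idxOf ii ≤ i → i < B →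
      ζ (B * b + i) (.inr (.inl (.inr ii))) = reduceC B ζ b (.inl ii) := by
    intro b i ii h1 h2
    have hr0 : inps.idxOf ii < inps.length := List.idxOf_lt_length_iff.mpr (hinps ii)
    rw [hredi]
    have e1 : ζ (B * b + i) (.inr (.inl (.inr ii))) =
        prevA initC ζ (B * b + (i + 1)) (.inr (.inl (.inr ii))) := rfl
    have e2 : ζ (B * b + (υ.length + inps.length)) (.inr (.inl (.inr ii))) =
        prevA initC ζ (B * b + (υ.length + inps.length + 1))
          (.inr (.inl (.inr ii))) := rfl
    rw [e1, e2]
    rcases le_or_gt (i + 1) (υ.length + inps.length + 1) with hc | hc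
    · refine (wconst _ b (i + 1) (υ.length + inps.length + 1) (by omega) (by omega) ?_).symm
      intro i' hi1 hi2
      refine ⟨fun h' => by omega, fun h' _ => by omega, fun r hr h' hy => ?_⟩
      simp only [Sum.inl.injEq, Sum.inr.injEq] at hy
      have := idxu ii r hr hy.symm
      omega
    · refine wconst _ b (υ.length + inps.length + 1) (i + 1) (by omega) (by omega) ?_
      intro i' hi1 hi2
      exact ⟨fun h' => by omega, fun h' => by omega, fun r hr h' => by omega⟩
  -- input values before their havoc
  have Liold : ∀ (b i : ℕ) (ii : I), i < υ.length + 1 + inps.idxOf ii → i < B →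
      ζ (B * b + i) (.inr (.inl (.inr ii))) = prevA init (reduceC B ζ) b (.inl ii) := by
    intro b i ii h1 h2
    have hr0 : inps.idxOf ii < inps.length := List.idxOf_lt_length_iff.mpr (hinps ii)
    have e1 : ζ (B * b + i) (.inr (.inl (.inr ii))) =
        prevA initC ζ (B * b + (i + 1)) (.inr (.inl (.inr ii))) := rfl
    have hsafe : ∀ i', 0 ≤ i' → i' < i + 1 →
        ((i' < υ.length → (Sum.inl (Sum.inr ii) : CStar I C) ≠ .inr i') ∧
        (i' = υ.length → ∀ c : C,
          (Sum.inl (Sum.inr ii) : CStar I C) ≠ .inl (.inl c)) ∧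
        (∀ r (hr : r < inps.length), i' = υ.length + 1 + r →
          (Sum.inl (Sum.inr ii) : CStar I C) ≠ .inl (.inr (inps[r]'hr)))) := by
      intro i' hi1 hi2
      refine ⟨fun h' => by simp, fun h' c => by simp, fun r hr h' hy => ?_⟩
      simp only [Sum.inl.injEq, Sum.inr.injEq] at hy
      have := idxu ii r hr hy.symm
      omega
    rw [e1]
    cases b with
    | zero =>
      have h0 := wconst (Sum.inl (Sum.inr ii)) 0 0 (i + 1) (by omega) (by omega) hsafe
      rw [h0, show B * 0 + 0 = 0 from by omega]
      exact hii ii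
    | succ b' =>
      have hms : B * (b' + 1) = B * b' + B := Nat.mul_succ _ _
      have h0 := wconst (Sum.inl (Sum.inr ii)) (b' + 1) 0 (i + 1) (by omega) (by omega) hsafe
      rw [h0, show B * (b' + 1) + 0 = B * b' + B from by omega]
      have h1 := wconst (Sum.inl (Sum.inr ii)) b' (υ.length + inps.length + 1) B
        (by omega) (by omega)
        (by
          intro i' hi1 hi2
          exact ⟨fun h' => by omega, fun h' => by omega, fun r hr h' => by omega⟩)
      rw [h1]
      have h2 : prevA initC ζ (B * b' + (υ.length + inps.length + 1))
          (.inr (.inl (.inr ii))) =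
          ζ (B * b' + (υ.length + inps.length)) (.inr (.inl (.inr ii))) := rfl
      rw [h2]
      exact (hredi b' ii).symm
  -- tmp cell values
  have Ltval : ∀ (b p : ℕ) (hp : p < υ.length),
      ζ (B * b + p) (.inr (.inr p)) =
        FTerm.eval T (prevA init (reduceC B ζ) b) (υ[p]'hp).2 := by
    intro b p hp
    have hj := hM (B * b + p)
    unfold matchesAt at hj
    rw [hstm0 b p hp] at hj
    have h1 : ζ (B * b + p) (.inr (.inr p)) =
        FTerm.eval T (prevA initC ζ (B * b + p)) ((υ[p]'hp).2.embed) := hj.1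
    rw [h1, embed_eval, hrestr b p (le_of_lt hp)]
  have Ltconst : ∀ (b i p : ℕ), p < υ.length → p ≤ i → i < B →
      ζ (B * b + i) (.inr (.inr p)) = ζ (B * b + p) (.inr (.inr p)) := by
    intro b i p hp h1 h2
    have e1 : ζ (B * b + i) (.inr (.inr p)) =
        prevA initC ζ (B * b + (i + 1)) (.inr (.inr p)) := rfl
    have e2 : ζ (B * b + p) (.inr (.inr p)) =
        prevA initC ζ (B * b + (p + 1)) (.inr (.inr p)) := rfl
    rw [e1, e2]
    refine wconst _ b (p + 1) (i + 1) (by omega) (by omega) ?_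
    intro i' hi1 hi2
    refine ⟨fun h' hy => ?_, fun h' c => by simp, fun r hr h' => by simp⟩
    simp only [Sum.inr.injEq] at hy
    omega
  have Ltold0 : ∀ (i p : ℕ), p < υ.length → i < p →
      ζ (B * 0 + i) (.inr (.inr p)) = initC (.inr (.inr p)) := by
    intro i p hp h1
    have e1 : ζ (B * 0 + i) (.inr (.inr p)) =
        prevA initC ζ (B * 0 + (i + 1)) (.inr (.inr p)) := rfl
    rw [e1]
    have h0 := wconst (Sum.inr p) 0 0 (i + 1) (by omega) (by omega)
      (by
        intro i' hi1 hi2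
        refine ⟨fun h' hy => ?_, fun h' c => by simp, fun r hr h' => by simp⟩
        simp only [Sum.inr.injEq] at hy
        omega)
    rw [h0, show B * 0 + 0 = 0 from by omega]
    rfl
  have Ltold : ∀ (b' i p : ℕ), p < υ.length → i < p → i < B →
      ζ (B * (b' + 1) + i) (.inr (.inr p)) = ζ (B * b' + p) (.inr (.inr p)) := by
    intro b' i p hp h1 h2
    have hms : B * (b' + 1) = B * b' + B := Nat.mul_succ _ _
    have e1 : ζ (B * (b' + 1) + i) (.inr (.inr p)) =
        prevA initC ζ (B * (b' + 1) + (i + 1)) (.inr (.inr p)) := rfl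
    have e2 : ζ (B * b' + p) (.inr (.inr p)) =
        prevA initC ζ (B * b' + (p + 1)) (.inr (.inr p)) := rfl
    rw [e1, e2]
    have h0 := wconst (Sum.inr p) (b' + 1) 0 (i + 1) (by omega) (by omega)
      (by
        intro i' hi1 hi2
        refine ⟨fun h' hy => ?_, fun h' c => by simp, fun r hr h' => by simp⟩
        simp only [Sum.inr.injEq] at hy
        omega)
    rw [h0, show B * (b' + 1) + 0 = B * b' + B from by omega]
    refine wconst _ b' (p + 1) B (by omega) (by omega) ?_
    intro i' hi1 hi2
    refine ⟨fun h' hy => ?_, fun h' c => by simp, fun r hr h' => by simp⟩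
    simp only [Sum.inr.injEq] at hy
    omega
  have Lthigh : ∀ (idx p : ℕ), υ.length ≤ p →
      ζ idx (.inr (.inr p)) = initC (.inr (.inr p)) := by
    intro idx p hp
    have e1 : ζ idx (.inr (.inr p)) = prevA initC ζ (idx + 1) (.inr (.inr p)) := rfl
    rw [e1]
    refine unch 0 (idx + 1) _ (by omega) ?_
    intro j _ _ ht
    rcases tcases j _ ht with ⟨ha, hb'⟩ | ⟨ha, c, hb'⟩ | ⟨r, hr, ha, hb'⟩
    · simp only [Sum.inr.injEq] at hb'
      omega
    · simp at hb'
    · simp at hb'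
  -- main computation
  funext idx x
  cases x with
  | inl e => exact e.elim
  | inr y =>
    obtain ⟨b, i, hi, hidx⟩ : ∃ b i, i < B ∧ idx = B * b + i :=
      ⟨idx / B, idx % B, Nat.mod_lt _ hBpos, by
        have := Nat.div_add_mod idx B
        omega⟩
    subst hidx
    cases y with
    | inl yc =>
      cases yc with
      | inl c =>
        simp only [adapt]
        rw [← hB, mdiv _ _ _ hi, mmod _ _ _ hi]
        split
        · calc ζ (B * b + i) (.inr (.inl (.inl c)))
              = restrA (prevA initC ζ (B * b + (i + 1))) (Sum.inr c) := rfl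
            _ = prevA init (reduceC B ζ) b (Sum.inr c) := by
                rw [hrestr b (i + 1) (by omega)]
        · exact Lcell b i c (by omega) hi
      | inr ii =>
        have hr0 : inps.idxOf ii < inps.length := List.idxOf_lt_length_iff.mpr (hinps ii)
        simp only [adapt]
        rw [← hB, mdiv _ _ _ hi, mmod _ _ _ hi]
        split_ifs with h1 h2 h3
        · exact Liold b i ii (by omega) hi
        · exact Linew b i ii (by omega) hi
        · exact Liold b i ii (by omega) hi
        · exact Linew b i ii (by omega) hi
    | inr p =>
      simp only [adapt]
      rw [← hB, mdiv _ _ _ hi, mmod _ _ _ hi]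
      by_cases hp : p < υ.length
      · simp only [List.getElem?_eq_getElem hp, Option.map_some, Option.getD_some]
        split_ifs with h1 h2
        · exact (Ltconst b i p hp h2 hi).trans (Ltval b p hp)
        · cases b with
          | zero => exact Ltold0 i p hp (by omega)
          | succ b' => exact (Ltold b' i p hp (by omega) hi).trans (Ltval b' p hp)
        · exact (Ltconst b i p hp (by omega) hi).trans (Ltval b p hp)
      · have hz := Lthigh (B * b + i) p (by omega)
        simp only [List.getElem?_eq_none (show υ.length ≤ p from by omega),
          Option.map_none, Option.getD_none]
        split_ifs with h1 h2
        · exact hz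
        · cases b with
          | zero => exact hz
          | succ b' =>
            simp only [List.getElem?_eq_none (show υ.length ≤ p from by omega),
              Option.map_none, Option.getD_none]
            exact hz
        · exact hz

end TSLMC
end

section
/- Let σ ∈ Stmt₀^ω and ζ a computation with ζ ◁ σ. Then the reduction of the adapted computation recovers ζ, i.e. (ζ̃)|σ = ζ: for every t, the assignment of ζ̃ at index ι(t) = (|𝕀| + |υ| + 3)·(t+1) − 3, restricted to 𝕀 ∪ ℂ, equals ζ_t. -/
namespace TSLMC
open scoped Classical
theorem reduce_adapt_eq
    {V I C F : Type} (T : Thy V F)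
    (init : Assign V I C) (initC : Assign V Empty (CStar I C))
    (hic : ∀ c : C, initC (.inr (.inl (.inl c))) = init (.inr c))
    (hii : ∀ i : I, initC (.inr (.inl (.inr i))) = init (.inl i))
    (υ : List (C × FTerm I C F))
    (inps : List I) (hinps : ∀ i : I, i ∈ inps) (hnd : inps.Nodup)
    (σ : ℕ → Stmt0 I C F) (ζ : ℕ → Assign V I C)
    (hζ : Matches T init ζ σ) :
    reduceC (inps.length + υ.length + 3) (adapt T υ inps init initC ζ) = ζ := by
  funext t x
  set m := υ.length with hm
  set k := inps.length with hk
  have hB : iotaIdx (k + m + 3) t = (m + k + 3) * t + (m + k) := by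
    simp only [iotaIdx]; ring_nf; omega
  have hdiv : ((m + k + 3) * t + (m + k)) / (m + k + 3) = t := by
    rw [Nat.mul_add_div (by omega), Nat.div_eq_of_lt (by omega)]
    omega
  have hmod : ((m + k + 3) * t + (m + k)) % (m + k + 3) = m + k := by
    rw [Nat.mul_add_mod, Nat.mod_eq_of_lt (by omega)]
  cases x with
  | inl i =>
    have hkpos : 0 < k := by
      rcases Nat.eq_zero_or_pos k with h0 | h
      · exfalso
        have hnil : inps = [] := by
          apply List.length_eq_zero_iff.mp; omega
        exact absurd (hinps i) (by simp [hnil])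
      · exact h
    have hio : inps.idxOf i < k := by
      rw [hk]; exact List.idxOf_lt_length_iff.mpr (hinps i)
    simp only [reduceC, Sum.swap_inl, adapt, ← hm, ← hk, hB, hdiv, hmod]
    rw [if_neg (by omega), if_pos (by omega), if_pos (by omega)]
  | inr c =>
    simp only [reduceC, Sum.swap_inr, adapt, ← hm, ← hk, hB, hdiv, hmod]
    rw [if_neg (by omega)]


end TSLMC
end
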